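/- arXiv:2012.03137 — 4 statements merged into one kernel-verified Lean document; each statement's English description precedes it below -/
import Mathlib

section
/- Let φ be the Laplace transform of an almost surely positive random variable M, let E₁, …, E_d be i.i.d. Exp(1) random variables independent of M, and set U_i = φ(E_i/M). Then each U_i is uniformly distributed on [0, 1]. -/
open MeasureTheory ProbabilityTheory

open Set Filter
open scoped ENNReal

lemma expTail (c : ℝ) (hc : 0 ≤ c) :
    expMeasure 1 (Set.Ici c) = ENNReal.ofReal (Real.exp (-c)) := by
  have hprob : IsProbabilityMeasure (expMeasure 1) := isProbabilityMeasure_expMeasure one_pos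
  have hIic : expMeasure 1 (Iic c) = ENNReal.ofReal (1 - Real.exp (-c)) := by
    rw [expMeasure, gammaMeasure, withDensity_apply _ measurableSet_Iic]
    have := lintegral_exponentialPDF_eq_antiDeriv one_pos c
    simp only [exponentialPDF, exponentialPDFReal] at this
    rw [show gammaPDF 1 1 = fun x => ENNReal.ofReal (gammaPDFReal 1 1 x) from rfl]
    rw [this, if_pos hc, one_mul]
  have hpt : expMeasure 1 {c} = 0 := by
    refine (withDensity_absolutelyContinuous volume _) ?_
    simp
  have hIio : expMeasure 1 (Iio c) = ENNReal.ofReal (1 - Real.exp (-c)) := by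
    have : expMeasure 1 (Iic c) = expMeasure 1 (Iio c) + expMeasure 1 {c} := by
      rw [← measure_union (by simp) (measurableSet_singleton c),
        show Iic c = _ by rw [← Iio_insert, Set.insert_eq, Set.union_comm]]
    rw [hpt, add_zero] at this
    rw [← this, hIic]
  have : expMeasure 1 (Ici c) = 1 - expMeasure 1 (Iio c) := by
    rw [← Set.compl_Iio, measure_compl measurableSet_Iio (measure_ne_top _ _), measure_univ]
  rw [this, hIio, ← ENNReal.ofReal_one, ← ENNReal.ofReal_sub _
    (by nlinarith [Real.exp_pos (-c), Real.exp_le_one_iff.2 (neg_nonpos.2 hc)])]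
  norm_num

lemma expIio : expMeasure 1 (Set.Iio (0:ℝ)) = 0 := by
  have hprob : IsProbabilityMeasure (expMeasure 1) := isProbabilityMeasure_expMeasure one_pos
  have h := expTail 0 le_rfl
  have : expMeasure 1 (Iio (0:ℝ)) = 1 - expMeasure 1 (Ici (0:ℝ)) := by
    rw [← Set.compl_Ici, measure_compl measurableSet_Ici (measure_ne_top _ _), measure_univ]
  rw [this, h]
  norm_num

lemma keyTail {Ω : Type*} [MeasurableSpace Ω] (μ : Measure Ω) [IsProbabilityMeasure μ]
    (M : Ω → ℝ) (hM : Measurable M) (hMpos : ∀ᵐ ω ∂μ, 0 < M ω)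
    (X : Ω → ℝ) (hX : Measurable X) (hXdist : Measure.map X μ = expMeasure 1)
    (hXM : IndepFun X M μ) (t : ℝ) (ht : 0 ≤ t) :
    μ {ω | t * M ω ≤ X ω} = ENNReal.ofReal (∫ ω, Real.exp (-t * M ω) ∂μ) := by
  have hjoint : μ.map (fun ω => (M ω, X ω)) = (μ.map M).prod (expMeasure 1) := by
    rw [← hXdist]
    exact (indepFun_iff_map_prod_eq_prod_map_map hM.aemeasurable hX.aemeasurable).1 hXM.symm
  have hexp : IsProbabilityMeasure (expMeasure 1) := isProbabilityMeasure_expMeasure one_pos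
  have hν : IsProbabilityMeasure (μ.map M) := Measure.isProbabilityMeasure_map hM.aemeasurable
  have hs : MeasurableSet {p : ℝ × ℝ | t * p.1 ≤ p.2} :=
    measurableSet_le (measurable_fst.const_mul t) measurable_snd
  have h1 : μ {ω | t * M ω ≤ X ω}
      = ((μ.map M).prod (expMeasure 1)) {p : ℝ × ℝ | t * p.1 ≤ p.2} := by
    rw [← hjoint, Measure.map_apply (hM.prodMk hX) hs]; rfl
  rw [h1, Measure.prod_apply hs]
  have hνpos : ∀ᵐ m ∂(μ.map M), 0 < m := (ae_map_iff hM.aemeasurable measurableSet_Ioi).2 hMpos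
  have h2 : ∫⁻ m, expMeasure 1 (Prod.mk m ⁻¹' {p : ℝ × ℝ | t * p.1 ≤ p.2}) ∂(μ.map M)
      = ∫⁻ m, ENNReal.ofReal (Real.exp (-t * m)) ∂(μ.map M) := by
    refine lintegral_congr_ae ?_
    filter_upwards [hνpos] with m hm
    have : Prod.mk m ⁻¹' {p : ℝ × ℝ | t * p.1 ≤ p.2} = Ici (t * m) := by
      ext x; simp [Set.mem_Ici]
    rw [this, expTail _ (by positivity), neg_mul]
  rw [h2, lintegral_map (by exact (Real.measurable_exp.comp (measurable_id.const_mul (-t)))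
    |>.ennreal_ofReal) hM]
  have hint : Integrable (fun ω => Real.exp (-t * M ω)) μ := by
    refine Integrable.mono' (integrable_const 1)
      ((Real.measurable_exp.comp (hM.const_mul (-t))).aestronglyMeasurable) ?_
    filter_upwards [hMpos] with ω hω
    rw [Real.norm_eq_abs, abs_of_pos (Real.exp_pos _)]
    exact Real.exp_le_one_iff.2 (by nlinarith)
  rw [ofReal_integral_eq_lintegral_ofReal hint
    (Filter.Eventually.of_forall fun ω => (Real.exp_pos _).le)]

/-- Marshall–Olkin sampling: if `φ` is the Laplace transform of an a.s. positive random
variable `M`, and `E₁, …, E_d` are i.i.d. `Exp(1)` random variables, each independent of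
`M`, then each `U_i = φ(E_i / M)` is uniformly distributed on `[0, 1]`. -/
theorem marshall_olkin_marginals_uniform
    {Ω : Type*} [MeasurableSpace Ω] (μ : Measure Ω) [IsProbabilityMeasure μ]
    (M : Ω → ℝ) (hM : Measurable M) (hMpos : ∀ᵐ ω ∂μ, 0 < M ω)
    (φ : ℝ → ℝ) (hφ : ∀ t, φ t = ∫ ω, Real.exp (-t * M ω) ∂μ)
    (d : ℕ) (E : Fin d → Ω → ℝ) (hEmeas : ∀ i, Measurable (E i))
    (hEdist : ∀ i, Measure.map (E i) μ = expMeasure 1)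
    (hEindep : iIndepFun E μ)
    (hEM : ∀ i, IndepFun (E i) M μ) :
    ∀ i, Measure.map (fun ω => φ (E i ω / M ω)) μ =
      (volume : Measure ℝ).restrict (Set.Icc 0 1) := by
  -- integrability
  have hint : ∀ t : ℝ, 0 ≤ t → Integrable (fun ω => Real.exp (-t * M ω)) μ := by
    intro t ht
    refine Integrable.mono' (integrable_const 1)
      ((Real.measurable_exp.comp (hM.const_mul (-t))).aestronglyMeasurable) ?_
    filter_upwards [hMpos] with ω hω
    rw [Real.norm_eq_abs, abs_of_pos (Real.exp_pos _)]
    exact Real.exp_le_one_iff.2 (by nlinarith)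
  -- φ 0 = 1
  have hφ0 : φ 0 = 1 := by
    rw [hφ]; simp
  -- φ positive on [0, ∞)
  have hφpos : ∀ t : ℝ, 0 ≤ t → 0 < φ t := by
    intro t ht
    rw [hφ t]
    refine (integral_pos_iff_support_of_nonneg_ae
      (Filter.Eventually.of_forall fun ω => (Real.exp_pos _).le) (hint t ht)).2 ?_
    have : Function.support (fun ω => Real.exp (-t * M ω)) = Set.univ := by
      ext ω; simp [Real.exp_ne_zero]
    rw [this]; simp
  -- φ ≤ 1 on [0, ∞)
  have hφle1 : ∀ t : ℝ, 0 ≤ t → φ t ≤ 1 := by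
    intro t ht
    rw [hφ t]
    calc ∫ ω, Real.exp (-t * M ω) ∂μ ≤ ∫ _, (1:ℝ) ∂μ := by
          refine integral_mono_ae (hint t ht) (integrable_const 1) ?_
          filter_upwards [hMpos] with ω hω
          exact Real.exp_le_one_iff.2 (by nlinarith)
      _ = 1 := by simp
  -- strict antitonicity
  have hanti : StrictAntiOn φ (Ici 0) := by
    intro s hs r hr hsr
    have hs0 : (0:ℝ) ≤ s := hs
    have hr0 : (0:ℝ) ≤ r := hr
    have hd : Integrable (fun ω => Real.exp (-s * M ω) - Real.exp (-r * M ω)) μ :=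
      (hint s hs0).sub (hint r hr0)
    have hnn : ∀ᵐ ω ∂μ, 0 ≤ Real.exp (-s * M ω) - Real.exp (-r * M ω) := by
      filter_upwards [hMpos] with ω hω
      have : Real.exp (-r * M ω) ≤ Real.exp (-s * M ω) :=
        Real.exp_le_exp.2 (by nlinarith)
      linarith
    have hpos : 0 < ∫ ω, (Real.exp (-s * M ω) - Real.exp (-r * M ω)) ∂μ := by
      refine (integral_pos_iff_support_of_nonneg_ae hnn hd).2 ?_
      have hmem : ∀ᵐ ω ∂μ, ω ∈ Function.support
          (fun ω => Real.exp (-s * M ω) - Real.exp (-r * M ω)) := by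
        filter_upwards [hMpos] with ω hω
        have : Real.exp (-r * M ω) < Real.exp (-s * M ω) :=
          Real.exp_lt_exp.2 (by nlinarith)
        simp only [Function.mem_support]
        intro h; nlinarith
      have hc : μ (Function.support
          (fun ω => Real.exp (-s * M ω) - Real.exp (-r * M ω)))ᶜ = 0 :=
        measure_eq_zero_iff_ae_notMem.2 (by filter_upwards [hmem] with ω h using by simpa using h)
      have h1 : (1:ℝ≥0∞) ≤ μ (Function.support
          (fun ω => Real.exp (-s * M ω) - Real.exp (-r * M ω))) := by
        have := measure_union_le (μ := μ)
          (Function.support (fun ω => Real.exp (-s * M ω) - Real.exp (-r * M ω)))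
          (Function.support (fun ω => Real.exp (-s * M ω) - Real.exp (-r * M ω)))ᶜ
        rw [Set.union_compl_self, measure_univ, hc, add_zero] at this
        exact this
      exact lt_of_lt_of_le (by norm_num) h1
    have hsub : ∫ ω, (Real.exp (-s * M ω) - Real.exp (-r * M ω)) ∂μ
        = (∫ ω, Real.exp (-s * M ω) ∂μ) - ∫ ω, Real.exp (-r * M ω) ∂μ :=
      integral_sub (hint s hs0) (hint r hr0)
    rw [hsub] at hpos
    rw [hφ s, hφ r]
    linarith
  -- continuity on [0, ∞)
  have hφfun : φ = fun s => ∫ ω, Real.exp (-s * M ω) ∂μ := funext hφ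
  have hcont : ContinuousOn φ (Ici 0) := by
    intro t ht
    rw [hφfun]
    refine tendsto_integral_filter_of_dominated_convergence (fun _ => (1:ℝ)) ?_ ?_
      (integrable_const 1) ?_
    · exact Filter.Eventually.of_forall fun s =>
        ((Real.measurable_exp.comp (hM.const_mul (-s))).aestronglyMeasurable)
    · filter_upwards [self_mem_nhdsWithin] with s hs
      filter_upwards [hMpos] with ω hω
      rw [Real.norm_eq_abs, abs_of_pos (Real.exp_pos _)]
      exact Real.exp_le_one_iff.2 (by nlinarith [Set.mem_Ici.1 hs])
    · refine Filter.Eventually.of_forall fun ω => ?_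
      have hc : Continuous fun s : ℝ => Real.exp (-s * M ω) :=
        Real.continuous_exp.comp ((continuous_id.neg).mul continuous_const)
      exact (hc.tendsto t).mono_left nhdsWithin_le_nhds
  -- tends to 0 at infinity
  have htop : Filter.Tendsto φ Filter.atTop (nhds 0) := by
    have h0 : (0:ℝ) = ∫ _, (0:ℝ) ∂μ := by simp
    rw [hφfun, h0]
    refine tendsto_integral_filter_of_dominated_convergence (fun _ => (1:ℝ)) ?_ ?_
      (integrable_const 1) ?_
    · exact Filter.Eventually.of_forall fun s =>
        ((Real.measurable_exp.comp (hM.const_mul (-s))).aestronglyMeasurable)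
    · filter_upwards [Filter.eventually_ge_atTop (0:ℝ)] with s hs
      filter_upwards [hMpos] with ω hω
      rw [Real.norm_eq_abs, abs_of_pos (Real.exp_pos _)]
      exact Real.exp_le_one_iff.2 (by nlinarith)
    · filter_upwards [hMpos] with ω hω
      have h1 : Filter.Tendsto (fun s : ℝ => -s * M ω) Filter.atTop Filter.atBot := by
        simp only [neg_mul]
        exact Filter.tendsto_neg_atBot_iff.2 (Filter.Tendsto.atTop_mul_const hω Filter.tendsto_id)
      exact Real.tendsto_exp_atBot.comp h1
  intro i
  have hX : Measurable (E i) := hEmeas i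
  have hXnn : ∀ᵐ ω ∂μ, 0 ≤ E i ω := by
    have : μ {ω | E i ω < 0} = 0 := by
      have : μ {ω | E i ω < 0} = (μ.map (E i)) (Iio 0) := by
        rw [Measure.map_apply hX measurableSet_Iio]; rfl
      rw [this, hEdist i, expIio]
    rw [MeasureTheory.ae_iff]
    convert this using 2
    ext ω; simp
  have hkey : ∀ t : ℝ, 0 ≤ t → μ {ω | t * M ω ≤ E i ω} = ENNReal.ofReal (φ t) := by
    intro t ht
    rw [keyTail μ M hM hMpos (E i) hX (hEdist i) (hEM i) t ht, ← hφ t]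
  set g : ℝ → ℝ := fun s => φ (max s 0) with hg
  have hgc : Continuous g :=
    hcont.comp_continuous (continuous_id.max continuous_const) (fun x => Set.mem_Ici.2 (le_max_right _ _))
  have hae : (fun ω => φ (E i ω / M ω)) =ᵐ[μ] fun ω => g (E i ω / M ω) := by
    filter_upwards [hMpos, hXnn] with ω h1 h2
    simp [hg, max_eq_left (div_nonneg h2 h1.le)]
  rw [Measure.map_congr hae]
  have hmeas_g : Measurable fun ω => g (E i ω / M ω) := hgc.measurable.comp (hX.div hM)
  have hprobmap : IsProbabilityMeasure (μ.map fun ω => g (E i ω / M ω)) :=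
    Measure.isProbabilityMeasure_map hmeas_g.aemeasurable
  refine Measure.ext_of_Iic _ _ fun u => ?_
  rw [Measure.map_apply hmeas_g measurableSet_Iic, Measure.restrict_apply measurableSet_Iic]
  rcases le_or_gt u 0 with hu | hu
  · have hL : μ ((fun ω => g (E i ω / M ω)) ⁻¹' Iic u) = 0 := by
      refine measure_eq_zero_iff_ae_notMem.2 ?_
      filter_upwards [hMpos, hXnn] with ω h1 h2
      have hr : 0 ≤ E i ω / M ω := div_nonneg h2 h1.le
      have hgv : g (E i ω / M ω) = φ (E i ω / M ω) := by simp [hg, max_eq_left hr]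
      simp only [Set.mem_preimage, Set.mem_Iic, hgv]
      push_neg
      exact lt_of_le_of_lt hu (hφpos _ hr)
    rw [hL]
    symm
    refine measure_mono_null ?_ (measure_singleton (0:ℝ))
    rintro x ⟨hx1, hx2, _⟩
    exact le_antisymm (le_trans hx1 hu) hx2
  · rcases le_or_gt u 1 with hu1 | hu1
    · -- 0 < u ≤ 1
      obtain ⟨T, hTu, hT0⟩ : ∃ T : ℝ, φ T < u ∧ 0 ≤ T :=
        ((htop.eventually_lt_const hu).and (Filter.eventually_ge_atTop 0)).exists
      obtain ⟨t, ht_mem, htu⟩ : ∃ t ∈ Icc 0 T, φ t = u := by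
        have hmem : u ∈ Icc (φ T) (φ 0) := ⟨hTu.le, by rw [hφ0]; exact hu1⟩
        exact intermediate_value_Icc' hT0 (hcont.mono Icc_subset_Ici_self) hmem
      have ht0 : (0:ℝ) ≤ t := ht_mem.1
      have hsetae : ((fun ω => g (E i ω / M ω)) ⁻¹' Iic u : Set Ω)
          =ᵐ[μ] {ω | t * M ω ≤ E i ω} := by
        filter_upwards [hMpos, hXnn] with ω h1 h2
        have hr : 0 ≤ E i ω / M ω := div_nonneg h2 h1.le
        have hgv : g (E i ω / M ω) = φ (E i ω / M ω) := by simp [hg, max_eq_left hr]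
        show (g (E i ω / M ω) ∈ Iic u) = (t * M ω ≤ E i ω)
        simp only [Set.mem_Iic, eq_iff_iff]
        rw [hgv, ← htu, hanti.le_iff_ge hr ht0, le_div_iff₀ h1]
      rw [measure_congr hsetae, hkey t ht0, htu]
      have hIcc : Iic u ∩ Icc 0 1 = Icc 0 u := by
        ext x
        constructor
        · rintro ⟨hx1, hx2, _⟩; exact ⟨hx2, hx1⟩
        · rintro ⟨hx1, hx2⟩; exact ⟨hx2, hx1, hx2.trans hu1⟩
      rw [hIcc, Real.volume_Icc, sub_zero]
    · -- u > 1
      have huniv : ((fun ω => g (E i ω / M ω)) ⁻¹' Iic u : Set Ω) =ᵐ[μ] (Set.univ : Set Ω) := by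
        filter_upwards [hMpos, hXnn] with ω h1 h2
        have hr : 0 ≤ E i ω / M ω := div_nonneg h2 h1.le
        have hgv : g (E i ω / M ω) = φ (E i ω / M ω) := by simp [hg, max_eq_left hr]
        show (g (E i ω / M ω) ∈ Iic u) = (ω ∈ Set.univ)
        simp only [Set.mem_Iic, Set.mem_univ, eq_iff_iff, iff_true, hgv]
        exact le_trans (hφle1 _ hr) hu1.le
      rw [measure_congr huniv, measure_univ]
      have hIcc : Iic u ∩ Icc 0 1 = Icc 0 1 :=
        Set.inter_eq_right.2 fun x hx => le_trans hx.2 hu1.le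
      rw [hIcc, Real.volume_Icc]
      norm_num
end

section
/- Let φ be the Laplace transform of an almost surely positive random variable M, let E₁, E₂ be i.i.d. Exp(1) independent of M, and U_i = φ(E_i/M). Then the joint distribution function of (U₁, U₂) is P(U₁ ≤ u₁, U₂ ≤ u₂) = φ(φ^{−1}(u₁) + φ^{−1}(u₂)) for u₁, u₂ ∈ (0, 1]. -/
open MeasureTheory ProbabilityTheory
open scoped ENNReal

lemma expMeasure_tail {c : ℝ} (hc : 0 ≤ c) :
    expMeasure 1 (Set.Ici c) = ENNReal.ofReal (Real.exp (-c)) := by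
  have : IsProbabilityMeasure (expMeasure 1) := isProbabilityMeasure_expMeasure one_pos
  have hIio : expMeasure 1 (Set.Iio c) = ENNReal.ofReal (1 - Real.exp (-c)) := by
    rw [expMeasure, gammaMeasure, withDensity_apply _ measurableSet_Iio]
    rw [setLIntegral_congr (MeasureTheory.Iio_ae_eq_Iic (a := c))]
    have := lintegral_exponentialPDF_eq_antiDeriv one_pos c
    simp only [exponentialPDF, exponentialPDFReal] at this
    rw [show gammaPDF 1 1 = fun x => ENNReal.ofReal (gammaPDFReal 1 1 x) from rfl, this,
      if_pos hc, one_mul]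
  have h1 : (expMeasure 1) (Set.Ici c) = 1 - expMeasure 1 (Set.Iio c) := by
    have : Set.Ici c = (Set.Iio c)ᶜ := by ext x; simp
    rw [this, prob_compl_eq_one_sub measurableSet_Iio]
  rw [h1, hIio]
  have he : Real.exp (-c) ≤ 1 := Real.exp_le_one_iff.2 (by linarith)
  have : ENNReal.ofReal (1 - Real.exp (-c)) + ENNReal.ofReal (Real.exp (-c)) = 1 := by
    rw [← ENNReal.ofReal_add (by linarith) (Real.exp_pos _).le]
    norm_num
  rw [← this, ENNReal.add_sub_cancel_left (by simp)]

lemma expMeasure_Iio_zero : expMeasure 1 (Set.Iio 0) = 0 := by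
  rw [expMeasure, gammaMeasure, withDensity_apply _ measurableSet_Iio]
  exact lintegral_gammaPDF_of_nonpos le_rfl

/-- Marshall–Olkin sampling: if `φ` is the Laplace transform of an a.s. positive random
variable `M`, and `E₁, E₂` are i.i.d. `Exp(1)` random variables, jointly independent of `M`,
and `U_i = φ(E_i / M)`, then `P(U₁ ≤ u₁, U₂ ≤ u₂) = φ(φ⁻¹(u₁) + φ⁻¹(u₂))` for
`u₁, u₂ ∈ (0, 1]`, where `ψ = φ⁻¹` is the inverse of `φ` as a map `(0,1] → [0,∞)`. -/
theorem marshall_olkin_joint_cdf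
    {Ω : Type*} [MeasurableSpace Ω] (μ : Measure Ω) [IsProbabilityMeasure μ]
    (M E₁ E₂ : Ω → ℝ) (hM : Measurable M) (hMpos : ∀ᵐ ω ∂μ, 0 < M ω)
    (hE₁ : Measurable E₁) (hE₂ : Measurable E₂)
    (hE₁dist : Measure.map E₁ μ = expMeasure 1)
    (hE₂dist : Measure.map E₂ μ = expMeasure 1)
    (hindep : iIndepFun ![E₁, E₂, M] μ)
    (φ : ℝ → ℝ) (hφ : ∀ t, φ t = ∫ ω, Real.exp (-t * M ω) ∂μ)
    (ψ : ℝ → ℝ)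
    (hψ : ∀ u ∈ Set.Ioc (0 : ℝ) 1, ψ u ∈ Set.Ici (0 : ℝ) ∧ φ (ψ u) = u) :
    ∀ u₁ ∈ Set.Ioc (0 : ℝ) 1, ∀ u₂ ∈ Set.Ioc (0 : ℝ) 1,
      μ {ω | φ (E₁ ω / M ω) ≤ u₁ ∧ φ (E₂ ω / M ω) ≤ u₂} =
        ENNReal.ofReal (φ (ψ u₁ + ψ u₂)) := by
  intro u₁ hu₁ u₂ hu₂
  obtain ⟨hs₁, hφs₁⟩ := hψ u₁ hu₁
  obtain ⟨hs₂, hφs₂⟩ := hψ u₂ hu₂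
  set s₁ := ψ u₁ with hs₁def
  set s₂ := ψ u₂ with hs₂def
  rw [Set.mem_Ici] at hs₁ hs₂
  -- measurability of integrands
  have hexpmeas : ∀ t : ℝ, Measurable (fun ω => Real.exp (-t * M ω)) :=
    fun t => (hM.const_mul (-t)).exp
  -- integrability of the exponentials
  have hint : ∀ t : ℝ, 0 ≤ t → Integrable (fun ω => Real.exp (-t * M ω)) μ := by
    intro t ht
    refine Integrable.mono' (integrable_const 1) (hexpmeas t).aestronglyMeasurable ?_
    filter_upwards [hMpos] with ω hω
    rw [Real.norm_eq_abs, abs_of_pos (Real.exp_pos _)]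
    exact Real.exp_le_one_iff.2 (by nlinarith)
  -- φ is strictly antitone on [0, ∞)
  have hanti : StrictAntiOn φ (Set.Ici 0) := by
    intro a ha b hb hab
    rw [Set.mem_Ici] at ha hb
    rw [hφ a, hφ b]
    have hdiff : Integrable (fun ω => Real.exp (-a * M ω) - Real.exp (-b * M ω)) μ :=
      (hint a ha).sub (hint b hb)
    have hnn : 0 ≤ᵐ[μ] fun ω => Real.exp (-a * M ω) - Real.exp (-b * M ω) := by
      filter_upwards [hMpos] with ω hω
      have : -b * M ω < -a * M ω := by nlinarith
      simp only [Pi.zero_apply, sub_nonneg]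
      exact (Real.exp_lt_exp.2 this).le
    have hpos : 0 < ∫ ω, (Real.exp (-a * M ω) - Real.exp (-b * M ω)) ∂μ := by
      rw [integral_pos_iff_support_of_nonneg_ae hnn hdiff]
      have hsub : ∀ᵐ ω ∂μ, ω ∈ Function.support
          (fun ω => Real.exp (-a * M ω) - Real.exp (-b * M ω)) := by
        filter_upwards [hMpos] with ω hω
        have : -b * M ω < -a * M ω := by nlinarith
        have := Real.exp_lt_exp.2 this
        simp only [Function.mem_support]
        intro h
        rw [sub_eq_zero] at h
        exact absurd h (ne_of_gt this)
      have h1 : μ (Function.support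
          (fun ω => Real.exp (-a * M ω) - Real.exp (-b * M ω))) = 1 := by
        rw [← measure_univ (μ := μ)]
        apply measure_congr
        rw [Filter.eventuallyEq_set]
        filter_upwards [hsub] with ω hω
        exact ⟨fun _ => Set.mem_univ ω, fun _ => hω⟩
      rw [h1]
      exact one_pos
    have := integral_sub (hint a ha) (hint b hb)
    rw [this] at hpos
    linarith
  -- E₁, E₂ are a.s. nonnegative
  have hEnn : ∀ (E : Ω → ℝ), Measurable E → Measure.map E μ = expMeasure 1 →
      ∀ᵐ ω ∂μ, 0 ≤ E ω := by
    intro E hE hEdist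
    have hz : μ {ω | E ω < 0} = 0 := by
      have h' : {ω | E ω < 0} = E ⁻¹' (Set.Iio 0) := rfl
      rw [h', ← Measure.map_apply hE measurableSet_Iio, hEdist, expMeasure_Iio_zero]
    rw [ae_iff]
    have h'' : {ω | ¬ 0 ≤ E ω} = {ω | E ω < 0} := by ext ω; simp [not_le]
    rw [h'', hz]
  have hE₁nn := hEnn E₁ hE₁ hE₁dist
  have hE₂nn := hEnn E₂ hE₂ hE₂dist
  -- Step A: rewrite the event
  have hsetEq : μ {ω | φ (E₁ ω / M ω) ≤ u₁ ∧ φ (E₂ ω / M ω) ≤ u₂}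
      = μ {ω | s₁ * M ω ≤ E₁ ω ∧ s₂ * M ω ≤ E₂ ω} := by
    apply measure_congr
    rw [Filter.eventuallyEq_set]
    filter_upwards [hMpos, hE₁nn, hE₂nn] with ω hMω h1 h2
    have hd1 : E₁ ω / M ω ∈ Set.Ici (0:ℝ) := Set.mem_Ici.2 (div_nonneg h1 hMω.le)
    have hd2 : E₂ ω / M ω ∈ Set.Ici (0:ℝ) := Set.mem_Ici.2 (div_nonneg h2 hMω.le)
    have k1 : φ (E₁ ω / M ω) ≤ u₁ ↔ s₁ * M ω ≤ E₁ ω := by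
      rw [← hφs₁, hanti.le_iff_ge hd1 (Set.mem_Ici.2 hs₁), le_div_iff₀ hMω]
    have k2 : φ (E₂ ω / M ω) ≤ u₂ ↔ s₂ * M ω ≤ E₂ ω := by
      rw [← hφs₂, hanti.le_iff_ge hd2 (Set.mem_Ici.2 hs₂), le_div_iff₀ hMω]
    rw [k1, k2]
  rw [hsetEq]
  -- Step B: independence
  haveI : IsProbabilityMeasure (expMeasure 1) := isProbabilityMeasure_expMeasure one_pos
  have hmeas : ∀ i, Measurable (![E₁, E₂, M] i) := by
    intro i; fin_cases i <;> simpa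
  have hpairE : IndepFun E₁ E₂ μ := by
    have := hindep.indepFun (show (0 : Fin 3) ≠ 1 by decide)
    simpa using this
  have hpairM : IndepFun (fun ω => (E₁ ω, E₂ ω)) M μ := by
    have := hindep.indepFun_prodMk hmeas 0 1 2 (by decide) (by decide)
    simpa using this
  have hmapE : Measure.map (fun ω => (E₁ ω, E₂ ω)) μ = (expMeasure 1).prod (expMeasure 1) := by
    have h := (indepFun_iff_map_prod_eq_prod_map_map hE₁.aemeasurable hE₂.aemeasurable).1 hpairE
    rw [hE₁dist, hE₂dist] at h
    exact h
  have hmapT : Measure.map (fun ω => ((E₁ ω, E₂ ω), M ω)) μ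
      = ((expMeasure 1).prod (expMeasure 1)).prod (Measure.map M μ) := by
    rw [← hmapE]
    exact (indepFun_iff_map_prod_eq_prod_map_map
      (hE₁.prodMk hE₂).aemeasurable hM.aemeasurable).1 hpairM
  -- the target set in the product space
  set S : Set ((ℝ × ℝ) × ℝ) := {p | s₁ * p.2 ≤ p.1.1 ∧ s₂ * p.2 ≤ p.1.2} with hSdef
  have hS : MeasurableSet S := by
    apply MeasurableSet.inter
    · exact measurableSet_le (measurable_snd.const_mul s₁) (measurable_fst.comp measurable_fst)
    · exact measurableSet_le (measurable_snd.const_mul s₂) (measurable_snd.comp measurable_fst)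
  have hT : Measurable (fun ω => ((E₁ ω, E₂ ω), M ω)) := (hE₁.prodMk hE₂).prodMk hM
  have step1 : μ {ω | s₁ * M ω ≤ E₁ ω ∧ s₂ * M ω ≤ E₂ ω}
      = (((expMeasure 1).prod (expMeasure 1)).prod (Measure.map M μ)) S := by
    rw [← hmapT, Measure.map_apply hT hS]
    rfl
  rw [step1]
  haveI : IsFiniteMeasure (Measure.map M μ) := by
    constructor
    rw [Measure.map_apply hM MeasurableSet.univ]
    simp
  rw [Measure.prod_apply_symm hS]
  have hinner : ∀ m : ℝ, ((fun p : ℝ × ℝ => (p, m)) ⁻¹' S)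
      = Set.Ici (s₁ * m) ×ˢ Set.Ici (s₂ * m) := by
    intro m; ext p
    simp [hSdef, Set.mem_prod, Prod.le_def]
  have hνpos : ∀ᵐ m ∂(Measure.map M μ), 0 < m := by
    rw [ae_map_iff hM.aemeasurable measurableSet_Ioi]
    exact hMpos
  have hcongr : ∫⁻ m, ((expMeasure 1).prod (expMeasure 1)) ((fun p : ℝ × ℝ => (p, m)) ⁻¹' S)
        ∂(Measure.map M μ)
      = ∫⁻ m, ENNReal.ofReal (Real.exp (-(s₁ + s₂) * m)) ∂(Measure.map M μ) := by
    apply lintegral_congr_ae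
    filter_upwards [hνpos] with m hm
    rw [hinner m, Measure.prod_prod, expMeasure_tail (mul_nonneg hs₁ hm.le),
      expMeasure_tail (mul_nonneg hs₂ hm.le), ← ENNReal.ofReal_mul (Real.exp_pos _).le,
      ← Real.exp_add]
    ring_nf
  rw [hcongr]
  have hintν : Integrable (fun m => Real.exp (-(s₁ + s₂) * m)) (Measure.map M μ) := by
    rw [integrable_map_measure (Continuous.aestronglyMeasurable (by continuity))
      hM.aemeasurable]
    exact hint (s₁ + s₂) (by linarith)
  have hnnν : 0 ≤ᵐ[Measure.map M μ] fun m => Real.exp (-(s₁ + s₂) * m) :=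
    Filter.Eventually.of_forall fun m => (Real.exp_pos _).le
  rw [← ofReal_integral_eq_lintegral_ofReal hintν hnnν]
  congr 1
  rw [integral_map hM.aemeasurable (Continuous.aestronglyMeasurable (by continuity)),
    hφ (s₁ + s₂)]
end

section
/- If the mixing random variable M of an Archimedean copula is discrete with finite support contained in (0, ∞), then the copula C(u,v) = φ(φ^{−1}(u)+φ^{−1}(v)) with φ(t) = E[e^{−tM}] has zero upper tail dependence: lim_{u→1⁻} (C(u,u) − 2u + 1)/(1 − u) = 0. -/
/-- If the mixing variable `M` of an Archimedean copula is discrete with finite support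
contained in `(0, ∞)` (so `φ(t) = Σ_k α_k e^{−β_k t}` with `β_k > 0`, `α_k > 0`, `Σ α_k = 1`),
then the copula `C(u,v) = φ(ψ(u) + ψ(v))` has zero upper tail dependence:
`lim_{u→1⁻} (C(u,u) − 2u + 1)/(1 − u) = 0`. -/
theorem archimedean_copula_zero_upper_tail_dependence
    (K : ℕ) (α β : Fin K → ℝ)
    (hα : ∀ k, 0 < α k) (hαsum : ∑ k, α k = 1) (hβ : ∀ k, 0 < β k)
    (φ : ℝ → ℝ) (hφ : ∀ t, φ t = ∑ k, α k * Real.exp (-(β k) * t))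
    (ψ : ℝ → ℝ)
    (hψ : ∀ u ∈ Set.Ioc (0 : ℝ) 1, ψ u ∈ Set.Ici (0 : ℝ) ∧ φ (ψ u) = u)
    (C : ℝ → ℝ → ℝ)
    (hC : ∀ u ∈ Set.Ioc (0 : ℝ) 1, ∀ v ∈ Set.Ioc (0 : ℝ) 1, C u v = φ (ψ u + ψ v)) :
    Filter.Tendsto (fun u => (C u u - 2 * u + 1) / (1 - u))
      (nhdsWithin 1 (Set.Ioo 0 1)) (nhds 0) := by
  -- K is positive
  have hK : 0 < K := by
    rcases Nat.eq_zero_or_pos K with h | h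
    · subst h; simp at hαsum
    · exact h
  haveI : Nonempty (Fin K) := Fin.pos_iff_nonempty.mp hK
  have hne : (Finset.univ : Finset (Fin K)).Nonempty := Finset.univ_nonempty
  set b : ℝ := Finset.univ.inf' hne β with hbdef
  set B : ℝ := Finset.univ.sup' hne β with hBdef
  have hb : 0 < b := by
    rw [hbdef, Finset.lt_inf'_iff]
    exact fun k _ => hβ k
  have hble : ∀ k, b ≤ β k := fun k => Finset.inf'_le _ (Finset.mem_univ k)
  have hleB : ∀ k, β k ≤ B := fun k => Finset.le_sup' _ (Finset.mem_univ k)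
  have hB : 0 < B := lt_of_lt_of_le hb (le_trans (hble (Classical.arbitrary _)) (hleB _))
  -- key bounds for u ∈ Ioo 0 1
  have main : ∀ u ∈ Set.Ioo (0:ℝ) 1,
      0 ≤ (C u u - 2 * u + 1) / (1 - u) ∧
      (C u u - 2 * u + 1) / (1 - u) ≤ 1 - u ^ (B / b) := by
    intro u hu
    have hu0 : 0 < u := hu.1
    have hu1 : u < 1 := hu.2
    have huIoc : u ∈ Set.Ioc (0:ℝ) 1 := ⟨hu0, le_of_lt hu1⟩
    obtain ⟨ht0, hφt⟩ := hψ u huIoc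
    set t := ψ u with htdef
    have ht0 : (0:ℝ) ≤ t := ht0
    -- u as a sum
    have husum : u = ∑ k, α k * Real.exp (-(β k) * t) := by rw [← hφt, hφ]
    have hCuu : C u u = ∑ k, α k * Real.exp (-(β k) * (t + t)) := by
      rw [hC u huIoc u huIoc, hφ]
    -- per-term square identity
    have key : ∀ k : Fin K, α k * Real.exp (-(β k) * (t + t))
        - 2 * (α k * Real.exp (-(β k) * t)) + α k
        = α k * (1 - Real.exp (-(β k) * t)) ^ 2 := by
      intro k
      have h2 : Real.exp (-(β k) * (t + t))
          = Real.exp (-(β k) * t) * Real.exp (-(β k) * t) := by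
        rw [← Real.exp_add]; ring_nf
      rw [h2]; ring
    have hnum : C u u - 2 * u + 1 = ∑ k, α k * (1 - Real.exp (-(β k) * t)) ^ 2 := by
      have e1 : ∑ k, α k * (1 - Real.exp (-(β k) * t)) ^ 2
          = (∑ k, α k * Real.exp (-(β k) * (t + t)))
            - 2 * (∑ k, α k * Real.exp (-(β k) * t)) + ∑ k, α k := by
        rw [Finset.mul_sum, ← Finset.sum_sub_distrib, ← Finset.sum_add_distrib]
        exact Finset.sum_congr rfl fun k _ => (key k).symm
      rw [e1, hαsum, ← hCuu, ← husum]
    have hden : 1 - u = ∑ k, α k * (1 - Real.exp (-(β k) * t)) := by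
      have : ∑ k, α k * (1 - Real.exp (-(β k) * t))
          = (∑ k, α k) - ∑ k, α k * Real.exp (-(β k) * t) := by
        rw [← Finset.sum_sub_distrib]
        exact Finset.sum_congr rfl fun k _ => by ring
      rw [this, hαsum, ← husum]
    have hden_pos : (0:ℝ) < 1 - u := by linarith
    -- each factor s_k ∈ [0, M] with M = 1 - exp(-B t)
    set M : ℝ := 1 - Real.exp (-B * t) with hMdef
    have hsk : ∀ k : Fin K, 0 ≤ 1 - Real.exp (-(β k) * t) ∧
        1 - Real.exp (-(β k) * t) ≤ M := by
      intro k
      constructor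
      · have : Real.exp (-(β k) * t) ≤ 1 := by
          rw [Real.exp_le_one_iff]
          nlinarith [hβ k, ht0]
        linarith
      · have : Real.exp (-B * t) ≤ Real.exp (-(β k) * t) := by
          apply Real.exp_le_exp.mpr
          nlinarith [hleB k, ht0]
        simp only [hMdef]; linarith
    -- numerator nonneg
    have hnum_nonneg : 0 ≤ C u u - 2 * u + 1 := by
      rw [hnum]
      apply Finset.sum_nonneg
      intro k _
      exact mul_nonneg (le_of_lt (hα k)) (sq_nonneg _)
    -- numerator ≤ M * (1 - u)
    have hnum_le : C u u - 2 * u + 1 ≤ M * (1 - u) := by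
      rw [hnum, hden, Finset.mul_sum]
      apply Finset.sum_le_sum
      intro k _
      have h1 := (hsk k).1
      have h2 := (hsk k).2
      have h3 := hα k
      nlinarith [mul_nonneg (le_of_lt h3) (mul_nonneg h1 (sub_nonneg.2 h2))]
    -- t ≤ -log u / b, hence exp(-B t) ≥ u^(B/b)
    have hub : u ≤ Real.exp (-b * t) := by
      calc u = ∑ k, α k * Real.exp (-(β k) * t) := husum
        _ ≤ ∑ k, α k * Real.exp (-b * t) := by
            apply Finset.sum_le_sum
            intro k _
            apply mul_le_mul_of_nonneg_left _ (le_of_lt (hα k))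
            apply Real.exp_le_exp.mpr
            nlinarith [hble k, ht0]
        _ = Real.exp (-b * t) := by rw [← Finset.sum_mul, hαsum, one_mul]
    have hlog : Real.log u ≤ -b * t := by
      have := Real.log_le_log hu0 hub
      rwa [Real.log_exp] at this
    have hrpow : u ^ (B / b) ≤ Real.exp (-B * t) := by
      rw [Real.rpow_def_of_pos hu0]
      apply Real.exp_le_exp.mpr
      have hBb : 0 < B / b := div_pos hB hb
      have : Real.log u * (B / b) ≤ (-b * t) * (B / b) :=
        mul_le_mul_of_nonneg_right hlog (le_of_lt hBb)
      calc Real.log u * (B / b) ≤ (-b * t) * (B / b) := this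
        _ = -B * t := by field_simp
    have hMle : M ≤ 1 - u ^ (B / b) := by simp only [hMdef]; linarith
    constructor
    · exact div_nonneg hnum_nonneg (le_of_lt hden_pos)
    · rw [div_le_iff₀ hden_pos]
      calc C u u - 2 * u + 1 ≤ M * (1 - u) := hnum_le
        _ ≤ (1 - u ^ (B / b)) * (1 - u) :=
            mul_le_mul_of_nonneg_right hMle (le_of_lt hden_pos)
    -- end main
  -- squeeze
  have hupper : Filter.Tendsto (fun u : ℝ => 1 - u ^ (B / b))
      (nhdsWithin 1 (Set.Ioo 0 1)) (nhds 0) := by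
    have hc : ContinuousAt (fun u : ℝ => 1 - u ^ (B / b)) 1 := by
      apply ContinuousAt.sub continuousAt_const
      exact Real.continuousAt_rpow_const 1 (B / b) (Or.inl one_ne_zero)
    have h2 := hc.tendsto.mono_left (nhdsWithin_le_nhds (s := Set.Ioo 0 1))
    simpa [Real.one_rpow] using h2
  apply tendsto_of_tendsto_of_tendsto_of_le_of_le' tendsto_const_nhds hupper
  · filter_upwards [self_mem_nhdsWithin] with u hu using (main u hu).1
  · filter_upwards [self_mem_nhdsWithin] with u hu using (main u hu).2
end

section
/- If the mixing random variable M of an Archimedean copula is bounded away from zero (there exists ε > 0 with P(M < ε) = 0), then the copula has zero lower tail dependence: lim_{u→0⁺} C(u,u)/u = 0, where C(u,v) = φ(φ^{−1}(u)+φ^{−1}(v)) and φ(t) = E[e^{−tM}]. -/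
open MeasureTheory

/-- If the mixing variable `M` of an Archimedean copula is bounded away from zero
(there is `ε > 0` with `P(M < ε) = 0`), then the copula `C(u,v) = φ(ψ(u) + ψ(v))`, where
`φ(t) = E[e^{−tM}]` and `ψ` is the inverse of `φ` on `(0, 1]`, has zero lower tail
dependence: `lim_{u→0⁺} C(u,u)/u = 0`. -/
theorem archimedean_copula_zero_lower_tail_dependence
    {Ω : Type*} [MeasurableSpace Ω] (μ : Measure Ω) [IsProbabilityMeasure μ]
    (M : Ω → ℝ) (hM : Measurable M)
    (ε : ℝ) (hε : 0 < ε) (hMε : μ {ω | M ω < ε} = 0)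
    (φ : ℝ → ℝ) (hφ : ∀ t, φ t = ∫ ω, Real.exp (-t * M ω) ∂μ)
    (ψ : ℝ → ℝ)
    (hψ : ∀ u ∈ Set.Ioc (0 : ℝ) 1, ψ u ∈ Set.Ici (0 : ℝ) ∧ φ (ψ u) = u)
    (C : ℝ → ℝ → ℝ)
    (hC : ∀ u ∈ Set.Ioc (0 : ℝ) 1, ∀ v ∈ Set.Ioc (0 : ℝ) 1, C u v = φ (ψ u + ψ v)) :
    Filter.Tendsto (fun u => C u u / u) (nhdsWithin 0 (Set.Ioi 0)) (nhds 0) := by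
  have hae : ∀ᵐ ω ∂μ, ε ≤ M ω := by
    rw [ae_iff]; simpa [not_le] using hMε
  have hint : ∀ t : ℝ, 0 ≤ t → Integrable (fun ω => Real.exp (-t * M ω)) μ := by
    intro t ht
    refine Integrable.mono' (integrable_const (1:ℝ))
      (Real.measurable_exp.comp (hM.const_mul (-t))).aestronglyMeasurable ?_
    filter_upwards [hae] with ω hω
    rw [Real.norm_eq_abs, abs_of_pos (Real.exp_pos _)]
    exact Real.exp_le_one_iff.mpr (by nlinarith)
  have hφpos : ∀ t : ℝ, 0 ≤ t → 0 < φ t := by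
    intro t ht
    rw [hφ]
    refine (integral_pos_iff_support_of_nonneg_ae
      (Filter.Eventually.of_forall fun ω => (Real.exp_pos _).le) (hint t ht)).mpr ?_
    have hs : Function.support (fun ω => Real.exp (-t * M ω)) = Set.univ := by
      ext ω; simp [Function.support, (Real.exp_pos (-t * M ω)).ne']
    rw [hs]
    simp
  have hanti : ∀ s t : ℝ, 0 ≤ s → s ≤ t → φ t ≤ φ s := by
    intro s t hs hst
    rw [hφ, hφ]
    refine integral_mono_ae (hint t (hs.trans hst)) (hint s hs) ?_
    filter_upwards [hae] with ω hω
    exact Real.exp_le_exp.mpr (by nlinarith)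
  have hkey : ∀ s : ℝ, 0 ≤ s → φ (s + s) ≤ Real.exp (-ε * s) * φ s := by
    intro s hs
    rw [hφ, hφ, ← MeasureTheory.integral_const_mul]
    refine integral_mono_ae (hint (s + s) (by linarith)) ((hint s hs).const_mul _) ?_
    filter_upwards [hae] with ω hω
    rw [← Real.exp_add]
    exact Real.exp_le_exp.mpr (by nlinarith)
  rw [Metric.tendsto_nhdsWithin_nhds]
  intro δ hδ
  set T : ℝ := max 1 ((1 - Real.log δ) / ε) with hTdef
  have hT1 : (1:ℝ) ≤ T := le_max_left _ _
  have hT0 : (0:ℝ) ≤ T := by linarith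
  have hexp : Real.exp (-ε * T) < δ := by
    have h2 : (1 - Real.log δ) / ε ≤ T := le_max_right _ _
    rw [div_le_iff₀ hε] at h2
    calc Real.exp (-ε * T) ≤ Real.exp (Real.log δ - 1) :=
          Real.exp_le_exp.mpr (by nlinarith)
      _ < Real.exp (Real.log δ) := Real.exp_lt_exp.mpr (by linarith)
      _ = δ := Real.exp_log hδ
  refine ⟨min (φ T) 1, lt_min (hφpos T hT0) one_pos, ?_⟩
  intro x hx hdist
  have hx0 : (0:ℝ) < x := hx
  rw [Real.dist_eq, sub_zero, abs_of_pos hx0] at hdist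
  have hx1 : x ≤ 1 := le_of_lt (lt_of_lt_of_le hdist (min_le_right _ _))
  have hmem : x ∈ Set.Ioc (0:ℝ) 1 := ⟨hx0, hx1⟩
  obtain ⟨hψx0, hφψ⟩ := hψ x hmem
  have hψx0 : 0 ≤ ψ x := hψx0
  have hTψ : T ≤ ψ x := by
    by_contra h
    push_neg at h
    have h1 : φ T ≤ φ (ψ x) := hanti (ψ x) T hψx0 h.le
    rw [hφψ] at h1
    have := lt_of_lt_of_le hdist (min_le_left _ _)
    linarith
  have hCuu : C x x = φ (ψ x + ψ x) := hC x hmem x hmem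
  have hbound : C x x / x ≤ Real.exp (-ε * ψ x) := by
    rw [hCuu, div_le_iff₀ hx0]
    calc φ (ψ x + ψ x) ≤ Real.exp (-ε * ψ x) * φ (ψ x) := hkey _ hψx0
      _ = Real.exp (-ε * ψ x) * x := by rw [hφψ]
  have hnonneg : 0 ≤ C x x / x := by
    refine div_nonneg ?_ hx0.le
    rw [hCuu, hφ]
    exact integral_nonneg fun ω => (Real.exp_pos _).le
  rw [Real.dist_eq, sub_zero, abs_of_nonneg hnonneg]
  calc C x x / x ≤ Real.exp (-ε * ψ x) := hbound
    _ ≤ Real.exp (-ε * T) := Real.exp_le_exp.mpr (by nlinarith)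
    _ < δ := hexp
end
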